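/- Weighted regret bound for DoG-like schemes: let $\mathcal{X}$ be a closed convex subset of a real Hilbert space, $x^\star \in \mathcal{X}$, and consider iterates $x_{k+1} = \Pi_{\mathcal{X}}(x_k - \eta_k g_k)$ with step sizes $\eta_k = \bar{r}_k/\sqrt{G_k'}$, where $\bar{r}_k = \max(\max_{i \le k}\|x_i - x_0\|, r_\epsilon)$ for some $r_\epsilon > 0$, $G_k = \sum_{i \le k}\|g_i\|^2$, and $G_k'$ is a positive nondecreasing sequence with $G_k' \ge G_k$. Then for all $t \ge 1$, $\sum_{k=0}^{t-1} \bar{r}_k \langle g_k, x_k - x^\star\rangle \le \bar{r}_t\,(2\bar{d}_t + \bar{r}_t)\sqrt{G_{t-1}'}$, where $\bar{d}_t = \max_{k \le t}\|x_k - x^\star\|$. -/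

import Mathlib

open Finset
open scoped RealInnerProductSpace

lemma dog_aux_sum_div_sqrt (a : ℕ → ℝ) (ha : ∀ k, 0 ≤ a k) (t : ℕ) :
    ∑ k ∈ range t, a k / Real.sqrt (∑ i ∈ range (k + 1), a i)
      ≤ 2 * Real.sqrt (∑ i ∈ range t, a i) := by
  induction t with
  | zero => simp
  | succ n ih =>
    rw [Finset.sum_range_succ (f := fun k => a k / Real.sqrt (∑ i ∈ range (k + 1), a i))]
    have hQn : (0:ℝ) ≤ ∑ i ∈ range n, a i := Finset.sum_nonneg fun i _ => ha i
    have hQs : (∑ i ∈ range (n + 1), a i) = (∑ i ∈ range n, a i) + a n :=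
      Finset.sum_range_succ a n
    have key : a n / Real.sqrt (∑ i ∈ range (n + 1), a i)
        ≤ 2 * Real.sqrt (∑ i ∈ range (n + 1), a i) - 2 * Real.sqrt (∑ i ∈ range n, a i) := by
      rcases eq_or_lt_of_le (ha n) with h0 | h0
      · have hq : Real.sqrt (∑ i ∈ range (n+1), a i) = Real.sqrt (∑ i ∈ range n, a i) := by
          rw [hQs, ← h0, add_zero]
        rw [hq, ← h0]
        simp
      · have hS : (0:ℝ) < ∑ i ∈ range (n + 1), a i := by rw [hQs]; linarith
        have hsS : 0 < Real.sqrt (∑ i ∈ range (n + 1), a i) := Real.sqrt_pos.mpr hS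
        rw [div_le_iff₀ hsS]
        have e1 : Real.sqrt (∑ i ∈ range (n+1), a i) ^ 2 = ∑ i ∈ range (n+1), a i :=
          Real.sq_sqrt hS.le
        have e2 : Real.sqrt (∑ i ∈ range n, a i) ^ 2 = ∑ i ∈ range n, a i :=
          Real.sq_sqrt hQn
        nlinarith [sq_nonneg (Real.sqrt (∑ i ∈ range (n+1), a i) - Real.sqrt (∑ i ∈ range n, a i)),
          Real.sqrt_nonneg (∑ i ∈ range n, a i), hsS]
    linarith [ih]

lemma dog_aux_abel (s D : ℕ → ℝ) (c : ℝ) (hc : 0 ≤ c) (hs : ∀ k, 0 ≤ s k)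
    (hmono : ∀ k, s k ≤ s (k + 1)) :
    ∀ t, 1 ≤ t → (∀ k, k ≤ t → D k - D 0 ≤ c) →
      ∑ k ∈ range t, s k * (D k - D (k + 1))
        ≤ s (t - 1) * c + s (t - 1) * (D 0 - D t) := by
  intro t ht
  induction t, ht using Nat.le_induction with
  | base =>
    intro _
    simp only [Finset.sum_range_one]
    nlinarith [mul_nonneg (hs 0) hc]
  | succ n hn ih =>
    intro hD
    have ih' := ih (fun k hk => hD k (by omega))
    rw [Finset.sum_range_succ]
    have hs' : s (n - 1) ≤ s n := by
      have := hmono (n - 1)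
      rwa [show n - 1 + 1 = n by omega] at this
    have hDn : D n - D 0 ≤ c := hD n (by omega)
    simp only [Nat.add_sub_cancel]
    nlinarith [hs n, hs (n - 1)]

/-- Weighted regret bound for DoG-like schemes (Lemma 1 of the paper):
with `η_k = r̄_k / √(G'_k)`, `r̄_k = max(max_{i ≤ k} ‖x_i - x₀‖, r_ε)`,
`G_k = ∑_{i ≤ k} ‖g_i‖²`, `G'` positive nondecreasing with `G'_k ≥ G_k`, and
`x_{k+1}` the projection of `x_k - η_k g_k` onto the closed convex set `𝒳`,
one has `∑_{k<t} r̄_k ⟨g_k, x_k - x⋆⟩ ≤ r̄_t (2 d̄_t + r̄_t) √(G'_{t-1})`. -/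
theorem dog_weighted_regret {H : Type*} [NormedAddCommGroup H]
    [InnerProductSpace ℝ H] [CompleteSpace H]
    (X : Set H) (hXconv : Convex ℝ X) (hXclosed : IsClosed X)
    (x g : ℕ → H) (xs : H) (hxs : xs ∈ X) (hx0 : x 0 ∈ X)
    (rε : ℝ) (hrε : 0 < rε)
    (rbar : ℕ → ℝ)
    (hrbar : ∀ k, rbar k =
      max ((Finset.range (k + 1)).sup' Finset.nonempty_range_add_one
            (fun i => ‖x i - x 0‖)) rε)
    (G' : ℕ → ℝ)
    (hG'pos : ∀ k, 0 < G' k)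
    (hG'mono : ∀ k, G' k ≤ G' (k + 1))
    (hG'ge : ∀ k, (∑ i ∈ Finset.range (k + 1), ‖g i‖ ^ 2) ≤ G' k)
    (hmem : ∀ k, x (k + 1) ∈ X)
    (hproj : ∀ k, ∀ y ∈ X,
      ‖x (k + 1) - (x k - (rbar k / Real.sqrt (G' k)) • g k)‖
        ≤ ‖y - (x k - (rbar k / Real.sqrt (G' k)) • g k)‖)
    (t : ℕ) (ht : 1 ≤ t) :
    ∑ k ∈ Finset.range t, rbar k * ⟪g k, x k - xs⟫
      ≤ rbar t *
          (2 * ((Finset.range (t + 1)).sup' Finset.nonempty_range_add_one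
                  (fun k => ‖x k - xs‖)) + rbar t)
            * Real.sqrt (G' (t - 1)) := by
  set D : ℕ → ℝ := fun k => ‖x k - xs‖ ^ 2 with hD
  set s : ℕ → ℝ := fun k => Real.sqrt (G' k) with hsdef
  set dbar : ℝ := (Finset.range (t + 1)).sup' Finset.nonempty_range_add_one
      (fun k => ‖x k - xs‖) with hdbar
  have hspos : ∀ k, 0 < s k := fun k => Real.sqrt_pos.mpr (hG'pos k)
  have hrpos : ∀ k, 0 < rbar k := fun k =>
    lt_of_lt_of_le hrε (by rw [hrbar k]; exact le_max_right _ _)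
  have hrmono : ∀ {a b : ℕ}, a ≤ b → rbar a ≤ rbar b := by
    intro a b hab
    rw [hrbar a, hrbar b]
    exact max_le_max (Finset.sup'_mono _ (Finset.range_subset_range.mpr (by omega)) _) le_rfl
  have hrge : ∀ k, ‖x k - x 0‖ ≤ rbar k := by
    intro k
    rw [hrbar k]
    exact le_trans (Finset.le_sup' (fun i => ‖x i - x 0‖) (Finset.self_mem_range_succ k))
      (le_max_left _ _)
  have hdge : ∀ k, k ≤ t → ‖x k - xs‖ ≤ dbar := by
    intro k hk
    exact Finset.le_sup' (fun j => ‖x j - xs‖) (Finset.mem_range.mpr (by omega))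
  have hdnn : 0 ≤ dbar := le_trans (norm_nonneg _) (hdge 0 (by omega))
  -- per-step inequality
  have step : ∀ k, rbar k * ⟪g k, x k - xs⟫
      ≤ s k / 2 * (D k - D (k + 1)) + rbar k ^ 2 * ‖g k‖ ^ 2 / (2 * s k) := by
    intro k
    set η : ℝ := rbar k / s k with hη
    have hηpos : 0 < η := div_pos (hrpos k) (hspos k)
    set u : H := x k - η • g k with hu
    haveI : Nonempty X := ⟨⟨xs, hxs⟩⟩
    have hinf : ‖u - x (k + 1)‖ = ⨅ w : X, ‖u - (w : H)‖ := by
      refine le_antisymm (le_ciInf fun w => ?_)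
        (ciInf_le (f := fun w : X => ‖u - (w : H)‖) ⟨0, fun b ⟨i, hi⟩ => hi ▸ norm_nonneg _⟩ ⟨x (k + 1), hmem k⟩)
      rw [norm_sub_rev u, norm_sub_rev u]
      exact hproj k w w.2
    have hvar : ⟪u - x (k + 1), xs - x (k + 1)⟫ ≤ 0 :=
      (norm_eq_iInf_iff_real_inner_le_zero hXconv (hmem k)).mp hinf xs hxs
    have hle : D (k + 1) ≤ ‖u - xs‖ ^ 2 := by
      have hexp : ‖u - xs‖ ^ 2 = ‖u - x (k + 1)‖ ^ 2
          + 2 * ⟪u - x (k + 1), x (k + 1) - xs⟫ + ‖x (k + 1) - xs‖ ^ 2 := by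
        have : u - xs = (u - x (k + 1)) + (x (k + 1) - xs) := by abel
        rw [this, norm_add_sq_real]
      have hswap : ⟪u - x (k + 1), x (k + 1) - xs⟫
          = - ⟪u - x (k + 1), xs - x (k + 1)⟫ := by
        rw [← inner_neg_right]; congr 1; abel
      simp only [hD]
      rw [hexp, hswap]
      nlinarith [sq_nonneg ‖u - x (k + 1)‖]
    have hexp2 : ‖u - xs‖ ^ 2 = D k - 2 * η * ⟪g k, x k - xs⟫ + η ^ 2 * ‖g k‖ ^ 2 := by
      have : u - xs = (x k - xs) - η • g k := by rw [hu]; abel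
      rw [this, norm_sub_sq_real, real_inner_smul_right, real_inner_comm,
        norm_smul, Real.norm_eq_abs, abs_of_pos hηpos]
      simp only [hD]
      ring
    have hstep : D (k + 1) ≤ D k - 2 * η * ⟪g k, x k - xs⟫ + η ^ 2 * ‖g k‖ ^ 2 := by
      rw [← hexp2]; exact hle
    have hsne : s k ≠ 0 := (hspos k).ne'
    have e1 : rbar k ^ 2 * ‖g k‖ ^ 2 / (2 * s k) = s k / 2 * (η ^ 2 * ‖g k‖ ^ 2) := by
      rw [hη]; field_simp
    have e2 : rbar k * ⟪g k, x k - xs⟫ = s k / 2 * (2 * η * ⟪g k, x k - xs⟫) := by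
      rw [hη]; field_simp
    rw [e1, e2, ← mul_add]
    have : 2 * η * ⟪g k, x k - xs⟫ ≤ (D k - D (k + 1)) + η ^ 2 * ‖g k‖ ^ 2 := by linarith
    exact mul_le_mul_of_nonneg_left this (by positivity)
  -- distance bound
  have hDbound : ∀ k, k ≤ t → D k - D 0 ≤ 2 * rbar t * dbar := by
    intro k hk
    have h1 : ‖x k - xs‖ - ‖x 0 - xs‖ ≤ ‖x k - x 0‖ := by
      have := norm_sub_norm_le (x k - xs) (x 0 - xs)
      rwa [sub_sub_sub_cancel_right] at this
    have h2 := (hrge k).trans (hrmono hk)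
    have h4 := hdge k hk
    have h5 := hdge 0 (by omega)
    simp only [hD]
    nlinarith [norm_nonneg (x k - xs), norm_nonneg (x 0 - xs), (hrpos t).le]
  have hD0t : D 0 - D t ≤ 2 * rbar t * dbar := by
    have h1 : ‖x 0 - xs‖ - ‖x t - xs‖ ≤ ‖x t - x 0‖ := by
      have := norm_sub_norm_le (x 0 - xs) (x t - xs)
      rwa [sub_sub_sub_cancel_right, norm_sub_rev (x 0) (x t)] at this
    have h2 := hrge t
    have h4 := hdge t le_rfl
    have h5 := hdge 0 (by omega)
    simp only [hD]
    nlinarith [norm_nonneg (x t - xs), norm_nonneg (x 0 - xs), (hrpos t).le]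
  -- Abel part
  have hsmono : ∀ k, s k ≤ s (k + 1) := fun k => Real.sqrt_le_sqrt (hG'mono k)
  have habel := dog_aux_abel s D (2 * rbar t * dbar)
    (by nlinarith [hrpos t, hdnn]) (fun k => (hspos k).le) hsmono t ht hDbound
  have partA : ∑ k ∈ range t, s k * (D k - D (k + 1))
      ≤ 4 * rbar t * dbar * s (t - 1) := by
    have := hspos (t - 1)
    nlinarith [habel, hD0t]
  -- second part
  have partB : ∑ k ∈ range t, rbar k ^ 2 * ‖g k‖ ^ 2 / (2 * s k)
      ≤ rbar t ^ 2 * s (t - 1) := by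
    have h1 : ∀ k ∈ range t, rbar k ^ 2 * ‖g k‖ ^ 2 / (2 * s k)
        ≤ rbar t ^ 2 / 2 * (‖g k‖ ^ 2 / Real.sqrt (∑ i ∈ range (k + 1), ‖g i‖ ^ 2)) := by
      intro k hk
      have hkt : k ≤ t := le_of_lt (Finset.mem_range.mp hk)
      have hr2 : rbar k ^ 2 ≤ rbar t ^ 2 := by
        nlinarith [hrmono hkt, (hrpos k).le]
      rcases eq_or_lt_of_le (sq_nonneg ‖g k‖) with hg0 | hg0
      · rw [← hg0]; simp
      · have hQ : 0 < ∑ i ∈ range (k + 1), ‖g i‖ ^ 2 := by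
          have : ‖g k‖ ^ 2 ≤ ∑ i ∈ range (k + 1), ‖g i‖ ^ 2 :=
            Finset.single_le_sum (f := fun i => ‖g i‖ ^ 2)
              (fun i _ => sq_nonneg _) (Finset.self_mem_range_succ k)
          linarith
        have hsq : Real.sqrt (∑ i ∈ range (k + 1), ‖g i‖ ^ 2) ≤ s k :=
          Real.sqrt_le_sqrt (hG'ge k)
        have hsqpos : 0 < Real.sqrt (∑ i ∈ range (k + 1), ‖g i‖ ^ 2) :=
          Real.sqrt_pos.mpr hQ
        have hA : rbar k ^ 2 * ‖g k‖ ^ 2 ≤ rbar t ^ 2 * ‖g k‖ ^ 2 :=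
          mul_le_mul_of_nonneg_right hr2 (sq_nonneg _)
        have hchain : rbar k ^ 2 * ‖g k‖ ^ 2 / (2 * s k)
            ≤ rbar t ^ 2 * ‖g k‖ ^ 2 / (2 * Real.sqrt (∑ i ∈ range (k + 1), ‖g i‖ ^ 2)) :=
          div_le_div₀ (by positivity) hA (by linarith) (by linarith)
        refine hchain.trans (le_of_eq ?_)
        ring
    calc ∑ k ∈ range t, rbar k ^ 2 * ‖g k‖ ^ 2 / (2 * s k)
        ≤ ∑ k ∈ range t, rbar t ^ 2 / 2 *
            (‖g k‖ ^ 2 / Real.sqrt (∑ i ∈ range (k + 1), ‖g i‖ ^ 2)) :=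
          Finset.sum_le_sum h1
      _ = rbar t ^ 2 / 2 * ∑ k ∈ range t,
            ‖g k‖ ^ 2 / Real.sqrt (∑ i ∈ range (k + 1), ‖g i‖ ^ 2) := by
          rw [Finset.mul_sum]
      _ ≤ rbar t ^ 2 / 2 * (2 * Real.sqrt (∑ i ∈ range t, ‖g i‖ ^ 2)) := by
          have := dog_aux_sum_div_sqrt (fun k => ‖g k‖ ^ 2) (fun k => sq_nonneg _) t
          exact mul_le_mul_of_nonneg_left this (by positivity)
      _ ≤ rbar t ^ 2 * s (t - 1) := by
          have : Real.sqrt (∑ i ∈ range t, ‖g i‖ ^ 2) ≤ s (t - 1) := by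
            apply Real.sqrt_le_sqrt
            have := hG'ge (t - 1)
            rwa [show t - 1 + 1 = t by omega] at this
          nlinarith [Real.sqrt_nonneg (∑ i ∈ range t, ‖g i‖ ^ 2), sq_nonneg (rbar t)]
  -- combine
  calc ∑ k ∈ Finset.range t, rbar k * ⟪g k, x k - xs⟫
      ≤ ∑ k ∈ range t, (s k / 2 * (D k - D (k + 1)) + rbar k ^ 2 * ‖g k‖ ^ 2 / (2 * s k)) :=
        Finset.sum_le_sum fun k _ => step k
    _ = (1 / 2) * (∑ k ∈ range t, s k * (D k - D (k + 1)))
          + ∑ k ∈ range t, rbar k ^ 2 * ‖g k‖ ^ 2 / (2 * s k) := by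
        rw [Finset.sum_add_distrib, Finset.mul_sum]
        congr 1
        exact Finset.sum_congr rfl fun k _ => by ring
    _ ≤ (1 / 2) * (4 * rbar t * dbar * s (t - 1)) + rbar t ^ 2 * s (t - 1) := by
        have := partA
        have := partB
        linarith
    _ = rbar t * (2 * dbar + rbar t) * Real.sqrt (G' (t - 1)) := by
        rw [hsdef]; ring
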